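/- Let n ≥ 2. If Λ = (λ_1,…,λ_n) ∈ Γ_{n−1}^+, then λ_i + λ_j > 0 for all pairs of distinct indices i ≠ j; that is, Γ_{n−1}^+ ⊆ V_{n−1}^+ = {(λ_1,…,λ_n) ∈ ℝ^n : λ_i + λ_j > 0 for all i ≠ j}. -/

import Mathlib

/-- The `k`-th elementary symmetric polynomial of `x : Fin n → ℝ`. -/
noncomputable def sigmaElem (n k : ℕ) (x : Fin n → ℝ) : ℝ :=
  ∑ s ∈ Finset.univ.powersetCard k, ∏ i ∈ s, x i

/-- The Gårding cone `Γ_k^+ ⊆ ℝ^n`: the connected component of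
`{σ_k > 0}` containing `(1, …, 1)`. -/
def GammaPlus (n k : ℕ) : Set (Fin n → ℝ) :=
  connectedComponentIn {x | 0 < sigmaElem n k x} (fun _ => 1)

lemma sigmaElem_pred_eq (n : ℕ) (hn : 1 ≤ n) (x : Fin n → ℝ) :
    sigmaElem n (n - 1) x = ∑ k : Fin n, ∏ m ∈ ({k}ᶜ : Finset (Fin n)), x m := by
  unfold sigmaElem
  have himg : Finset.univ.powersetCard (n - 1)
      = Finset.univ.image (fun k : Fin n => ({k}ᶜ : Finset (Fin n))) := by
    ext s
    simp only [Finset.mem_powersetCard, Finset.mem_image, Finset.mem_univ, true_and]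
    constructor
    · rintro ⟨-, hcard⟩
      have hc : sᶜ.card = 1 := by
        rw [Finset.card_compl, hcard, Fintype.card_fin]
        omega
      obtain ⟨k, hk⟩ := Finset.card_eq_one.mp hc
      exact ⟨k, by rw [← compl_compl s, hk]⟩
    · rintro ⟨k, rfl⟩
      refine ⟨Finset.subset_univ _, ?_⟩
      rw [Finset.card_compl, Finset.card_singleton, Fintype.card_fin]
  rw [himg, Finset.sum_image]
  intro a _ b _ hab
  beta_reduce at hab
  have : ({a} : Finset (Fin n)) = {b} := by rw [← compl_compl ({a} : Finset (Fin n)), hab, compl_compl]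
  simpa using this

lemma sigmaElem_nonpos (n : ℕ) (hn : 2 ≤ n) (x : Fin n → ℝ) (i j : Fin n) (hij : i ≠ j)
    (h0 : x i + x j = 0) (hge : ∀ p q : Fin n, p ≠ q → 0 ≤ x p + x q) :
    sigmaElem n (n - 1) x ≤ 0 := by
  have hnn : ∀ m : Fin n, m ≠ i → m ≠ j → 0 ≤ x m := by
    intro m hmi hmj
    have h1 := hge m i hmi
    have h2 := hge m j hmj
    nlinarith
  rw [sigmaElem_pred_eq n (by omega) x]
  rw [← Finset.sum_add_sum_compl ({i, j} : Finset (Fin n))]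
  have hset : (({i} : Finset (Fin n))ᶜ).erase j = (({j} : Finset (Fin n))ᶜ).erase i := by
    ext m
    simp only [Finset.mem_erase, Finset.mem_compl, Finset.mem_singleton]
    tauto
  have hpair : ∑ k ∈ ({i, j} : Finset (Fin n)), ∏ m ∈ ({k}ᶜ : Finset (Fin n)), x m = 0 := by
    rw [Finset.sum_pair hij]
    have hi : ∏ m ∈ ({i}ᶜ : Finset (Fin n)), x m
        = x j * ∏ m ∈ (({i} : Finset (Fin n))ᶜ).erase j, x m := by
      rw [Finset.mul_prod_erase _ _ (by simp [Ne.symm hij])]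
    have hj : ∏ m ∈ ({j}ᶜ : Finset (Fin n)), x m
        = x i * ∏ m ∈ (({j} : Finset (Fin n))ᶜ).erase i, x m := by
      rw [Finset.mul_prod_erase _ _ (by simp [hij])]
    rw [hi, hj, ← hset]
    linear_combination (∏ m ∈ (({i} : Finset (Fin n))ᶜ).erase j, x m) * h0
  rw [hpair, zero_add]
  apply Finset.sum_nonpos
  intro k hk
  simp only [Finset.mem_compl, Finset.mem_insert, Finset.mem_singleton, not_or] at hk
  obtain ⟨hki, hkj⟩ := hk
  have hik : i ∈ ({k}ᶜ : Finset (Fin n)) := by simp [Ne.symm hki]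
  have hjk : j ∈ (({k} : Finset (Fin n))ᶜ).erase i := by
    simp [Ne.symm hkj, Ne.symm hij]
  rw [← Finset.mul_prod_erase _ _ hik, ← Finset.mul_prod_erase _ _ hjk, ← mul_assoc]
  have hQ : 0 ≤ ∏ m ∈ ((({k} : Finset (Fin n))ᶜ).erase i).erase j, x m := by
    apply Finset.prod_nonneg
    intro m hm
    simp only [Finset.mem_erase, Finset.mem_compl, Finset.mem_singleton] at hm
    exact hnn m hm.2.1 hm.1
  have hxj : x j = -x i := by linarith
  have hxij : x i * x j ≤ 0 := by rw [hxj]; nlinarith [sq_nonneg (x i)]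
  exact mul_nonpos_of_nonpos_of_nonneg hxij hQ

/-- `Γ_{n-1}^+ ⊆ V_{n-1}^+`, i.e. `λ_i + λ_j > 0` for `i ≠ j`. -/
theorem gammaPlus_subset_V (n : ℕ) (hn : 2 ≤ n) (Λ : Fin n → ℝ)
    (h : Λ ∈ GammaPlus n (n - 1)) :
    ∀ i j : Fin n, i ≠ j → 0 < Λ i + Λ j := by
  set S : Set (Fin n → ℝ) := {x | 0 < sigmaElem n (n - 1) x} with hS
  set U : Set (Fin n → ℝ) := {x | ∀ i j : Fin n, i ≠ j → 0 < x i + x j} with hUdef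
  set Vc : Set (Fin n → ℝ) := {x | ∀ i j : Fin n, i ≠ j → 0 ≤ x i + x j} with hVdef
  have hone : (fun _ : Fin n => (1 : ℝ)) ∈ S := by
    have : sigmaElem n (n - 1) (fun _ => 1) = n := by
      unfold sigmaElem
      simp only [Finset.prod_const_one, Finset.sum_const, nsmul_eq_mul, mul_one]
      rw [Finset.card_powersetCard, Finset.card_univ, Fintype.card_fin]
      have h1 : n - (n - 1) = 1 := by omega
      have := Nat.choose_symm (show n - 1 ≤ n by omega)
      rw [h1, Nat.choose_one_right] at this
      rw [← this]
    simp only [hS, Set.mem_setOf_eq, this]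
    positivity
  have hUopen : IsOpen U := by
    have : U = ⋂ i : Fin n, ⋂ j : Fin n, ⋂ (_ : i ≠ j), {x : Fin n → ℝ | 0 < x i + x j} := by
      ext x; simp [hUdef]
    rw [this]
    refine isOpen_iInter_of_finite fun i => isOpen_iInter_of_finite fun j =>
      isOpen_iInter_of_finite fun _ => ?_
    exact isOpen_lt continuous_const ((continuous_apply i).add (continuous_apply j))
  have hVclosed : IsClosed Vc := by
    have : Vc = ⋂ i : Fin n, ⋂ j : Fin n, ⋂ (_ : i ≠ j), {x : Fin n → ℝ | 0 ≤ x i + x j} := by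
      ext x; simp [hVdef]
    rw [this]
    refine isClosed_iInter fun i => isClosed_iInter fun j => isClosed_iInter fun _ => ?_
    exact isClosed_le continuous_const ((continuous_apply i).add (continuous_apply j))
  have hsub : GammaPlus n (n - 1) ⊆ U := by
    apply IsPreconnected.subset_left_of_subset_union hUopen hVclosed.isOpen_compl
    · rw [Set.disjoint_left]
      intro x hxU hxVc
      exact hxVc fun i j hij => le_of_lt (hxU i j hij)
    · intro x hx
      by_cases hV : x ∈ Vc
      · left
        intro i j hij
        rcases lt_or_eq_of_le (hV i j hij) with hlt | heq
        · exact hlt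
        · exfalso
          have hle := sigmaElem_nonpos n hn x i j hij heq.symm hV
          have hxS : x ∈ S := connectedComponentIn_subset S _ hx
          exact absurd hxS (by simp [hS, Set.mem_setOf_eq]; linarith)
      · right; exact hV
    · exact ⟨fun _ => 1, mem_connectedComponentIn hone, fun i j _ => by norm_num⟩
    · exact (isConnected_connectedComponentIn_iff.mpr hone).isPreconnected
  exact hsub h
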